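/- Work on the circle 𝕋 = ℝ/ℤ with quotient metric d and Lebesgue (Haar) measure λ. Let b ∈ (0,1), f_0(x) = 3x mod 1, f_1(x) = 3x + b mod 1, and p ∈ [0,1]. Fix k ≥ 2, let Δ_r^k = {(x_1,…,x_k) ∈ 𝕋^k : max_{i=2,…,k} d(x_1, x_i) < r}, and for ξ ∈ {0,1}^k let f_ξ = f_{ξ_1} × ⋯ × f_{ξ_k} act coordinatewise and w(ξ) = p^{#{i : ξ_i = 0}}·(1−p)^{#{i : ξ_i = 1}}. Then lim_{r→0⁺} [ Σ_{ξ ∈ {0,1}^k} w(ξ)·λ^{⊗k}( Δ_r^k ∩ f_ξ^{-1}(Δ_r^k) ) ] / λ^{⊗k}( Δ_r^k ) = (p^k + (1−p)^k)/3^{k−1}. (Hence the dynamical extremal index of the annealed random system is θ_k = 1 − q_0^{(unp)}·(p^k + (1−p)^k) with q_0^{(unp)} = 3^{−(k−1)}.) -/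

import Mathlib

open MeasureTheory Set Filter Metric
open scoped ENNReal

-- norm lemmas
lemma my_norm_three {u : UnitAddCircle} (h : ‖u‖ < 1/6) : ‖u + u + u‖ = 3 * ‖u‖ := by
  induction u using QuotientAddGroup.induction_on with
  | H s =>
    rw [UnitAddCircle.norm_eq] at h ⊢
    have hc : ((s : UnitAddCircle) + s + s) = ((s + s + s : ℝ) : UnitAddCircle) := by
      rw [← QuotientAddGroup.mk_add, ← QuotientAddGroup.mk_add]
    rw [hc, UnitAddCircle.norm_eq]
    have h3 : round (s + s + s) = 3 * round s := by
      have : s + s + s = (s - round s) + (s - round s) + (s - round s) + ((3 * round s : ℤ) : ℝ) := by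
        push_cast; ring
      rw [this, round_add_intCast, round_eq_zero_iff.mpr ⟨by cases abs_lt.mp h; linarith, by
        cases abs_lt.mp h; linarith⟩]
      push_cast; ring
    rw [h3]
    have : s + s + s - (3 * round s : ℤ) = 3 * (s - round s) := by push_cast; ring
    rw [this, abs_mul, abs_of_nonneg (by norm_num : (0:ℝ) ≤ 3)]

lemma my_norm_three_le (u : UnitAddCircle) : ‖u + u + u‖ ≤ 3 * ‖u‖ := by
  calc ‖u + u + u‖ ≤ ‖u + u‖ + ‖u‖ := norm_add_le _ _
    _ ≤ (‖u‖ + ‖u‖) + ‖u‖ := by gcongr; exact norm_add_le _ _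
    _ = 3 * ‖u‖ := by ring

lemma my_vol_ball (x : UnitAddCircle) (ε : ℝ) :
    volume (Metric.ball x ε) = ENNReal.ofReal (min 1 (2 * ε)) := by
  rw [← measure_congr AddCircle.closedBall_ae_eq_ball, AddCircle.volume_closedBall]

lemma my_T0 {r : ℝ} (hr0 : 0 < r) (hr : r ≤ 1/6) :
    {u : UnitAddCircle | ‖u‖ < r ∧ ‖u + u + u‖ < r} = Metric.ball (0 : UnitAddCircle) (r/3) := by
  ext u
  simp only [mem_setOf_eq, Metric.mem_ball, dist_zero_right]
  constructor
  · rintro ⟨h1, h2⟩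
    have := my_norm_three (lt_of_lt_of_le h1 hr)
    linarith
  · intro h
    have h1 : ‖u‖ < r := by linarith
    exact ⟨h1, lt_of_le_of_lt (my_norm_three_le u) (by linarith)⟩

lemma my_Tb {r : ℝ} {d : UnitAddCircle} (hr0 : 0 < r) (hr : 4 * r ≤ ‖d‖) :
    {u : UnitAddCircle | ‖u‖ < r ∧ ‖u + u + u + d‖ < r} = (∅ : Set UnitAddCircle) := by
  ext u
  simp only [mem_setOf_eq, mem_empty_iff_false, iff_false, not_and, not_lt]
  intro h1
  have h3 : ‖u + u + u‖ ≤ 3 * ‖u‖ := my_norm_three_le u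
  have : ‖d‖ ≤ ‖u + u + u + d‖ + ‖u + u + u‖ := by
    have := norm_sub_le (u + u + u + d) (u + u + u)
    simpa using this
  linarith

lemma my_vol_pi (n : ℕ) (T : Fin (n+1) → Set UnitAddCircle) (hT : ∀ i, MeasurableSet (T i)) :
    volume {x : Fin (n+1) → UnitAddCircle | ∀ i, i ≠ 0 → x i - x 0 ∈ T i}
      = ∏ j : Fin n, volume (T j.succ) := by
  classical
  set B : Set (UnitAddCircle × (Fin n → UnitAddCircle)) :=
    {q | ∀ j : Fin n, q.2 j - q.1 ∈ T j.succ} with hBdef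
  have hB : MeasurableSet B := by
    have : B = ⋂ j : Fin n,
        (fun q : UnitAddCircle × (Fin n → UnitAddCircle) => q.2 j - q.1) ⁻¹' T j.succ := by
      ext q; simp [hBdef]
    rw [this]
    exact MeasurableSet.iInter fun j => (hT j.succ).preimage (by fun_prop)
  have hmp := MeasureTheory.volume_preserving_piFinSuccAbove
      (fun _ : Fin (n+1) => UnitAddCircle) 0
  have hset : {x : Fin (n+1) → UnitAddCircle | ∀ i, i ≠ 0 → x i - x 0 ∈ T i}
      = (MeasurableEquiv.piFinSuccAbove (fun _ : Fin (n+1) => UnitAddCircle) 0) ⁻¹' B := by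
    ext x
    simp only [mem_setOf_eq, mem_preimage, MeasurableEquiv.piFinSuccAbove_apply, hBdef,
      Fin.succAbove_zero]
    constructor
    · intro h j; exact h j.succ (Fin.succ_ne_zero j)
    · intro h i hi
      obtain ⟨j, rfl⟩ := Fin.exists_succ_eq.mpr hi
      exact h j
  rw [hset, hmp.measure_preimage hB.nullMeasurableSet]
  have hsec : ∀ y : UnitAddCircle,
      (volume : Measure (Fin n → UnitAddCircle)) (Prod.mk y ⁻¹' B)
        = ∏ j : Fin n, volume (T j.succ) := by
    intro y
    have : (Prod.mk y ⁻¹' B : Set (Fin n → UnitAddCircle))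
        = Set.univ.pi fun j => (fun w => w + (-y)) ⁻¹' T j.succ := by
      ext z; simp [hBdef, sub_eq_add_neg]
    rw [this, volume_pi, Measure.pi_pi]
    exact Finset.prod_congr rfl fun j _ => measure_preimage_add_right volume (-y) _
  rw [Measure.volume_eq_prod, Measure.prod_apply hB]
  simp only [hsec]
  rw [lintegral_const, UnitAddCircle.measure_univ, mul_one]
/-- Dynamical extremal index of the annealed random system choosing `f₀(x) = 3x mod 1`
with probability `p` and `f₁(x) = 3x + b mod 1` with probability `1 − p` on each
coordinate: with `Δ_r^k` the `r`-neighborhood of the diagonal in `𝕋^k`, `f_ξ` the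
coordinatewise action of the word `ξ ∈ {0,1}^k` and `w(ξ)` its Bernoulli weight,
`lim_{r→0⁺} [Σ_ξ w(ξ)·λ^{⊗k}(Δ_r^k ∩ f_ξ⁻¹ Δ_r^k)]/λ^{⊗k}(Δ_r^k)
  = (p^k + (1−p)^k)/3^{k−1}`. -/
theorem stmt14 (b : ℝ) (hb : b ∈ Set.Ioo (0:ℝ) 1) (p : ℝ) (hp : p ∈ Set.Icc (0:ℝ) 1)
    (f : Bool → UnitAddCircle → UnitAddCircle)
    (hf₀ : ∀ x, f false x = x + x + x)
    (hf₁ : ∀ x, f true x = x + x + x + (b : UnitAddCircle))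
    (k : ℕ) (hk : 2 ≤ k)
    (Δ : ℝ → Set (Fin k → UnitAddCircle))
    (hΔ : ∀ r : ℝ, Δ r
      = {x | ∀ i : Fin k, i ≠ ⟨0, by omega⟩ → dist (x ⟨0, by omega⟩) (x i) < r})
    (w : (Fin k → Bool) → ℝ)
    (hw : ∀ ξ, w ξ = p ^ (Finset.univ.filter fun i => ξ i = false).card
        * (1 - p) ^ (Finset.univ.filter fun i => ξ i = true).card) :
    Tendsto (fun r : ℝ =>
        (∑ ξ : Fin k → Bool,
          ENNReal.ofReal (w ξ) * volume (Δ r ∩ (fun x i => f (ξ i) (x i)) ⁻¹' Δ r))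
          / volume (Δ r))
      (nhdsWithin 0 (Set.Ioi 0))
      (nhds (ENNReal.ofReal ((p ^ k + (1 - p) ^ k) / 3 ^ (k - 1)))) := by
  classical
  obtain ⟨hb0, hb1⟩ := hb
  obtain ⟨hp0, hp1⟩ := hp
  obtain ⟨n, rfl⟩ : ∃ n, k = n + 1 := ⟨k - 1, by omega⟩
  set β : ℝ := ‖((b : ℝ) : UnitAddCircle)‖ with hβdef
  have hβ : 0 < β := by
    rw [hβdef, norm_pos_iff, Ne, AddCircle.coe_eq_zero_iff]
    rintro ⟨m, hm⟩
    simp only [zsmul_eq_mul, mul_one] at hm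
    have h1 : (0:ℝ) < (m:ℝ) := hm ▸ hb0
    have h2 : ((m:ℝ)) < 1 := hm ▸ hb1
    have h1' : (0:ℤ) < m := by exact_mod_cast h1
    have h2' : m < (1:ℤ) := by exact_mod_cast h2
    omega
  set g : Bool → UnitAddCircle := fun s => if s then ((b : ℝ) : UnitAddCircle) else 0 with hgdef
  have hf : ∀ s x, f s x = x + x + x + g s := by
    intro s x
    cases s
    · simpa [hgdef] using hf₀ x
    · simpa [hgdef] using hf₁ x
  have hgnorm : ∀ a c : Bool, a ≠ c → ‖g a - g c‖ = β := by
    intro a c hac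
    cases a <;> cases c
    · exact absurd rfl hac
    · have h : g false - g true = -(((b : ℝ) : UnitAddCircle)) := by simp [hgdef]
      rw [h, norm_neg, hβdef]
    · have h : g true - g false = ((b : ℝ) : UnitAddCircle) := by simp [hgdef]
      rw [h, hβdef]
    · exact absurd rfl hac
  set ε : ℝ := min (1/6) (β/4) with hεdef
  have hε : 0 < ε := lt_min (by norm_num) (by linarith)
  set C : ℝ≥0∞ := ENNReal.ofReal ((p ^ (n+1) + (1 - p) ^ (n+1)) / 3 ^ n) with hCdef
  have main : ∀ r ∈ Set.Ioo (0:ℝ) ε,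
      (∑ ξ : Fin (n+1) → Bool,
          ENNReal.ofReal (w ξ) * volume (Δ r ∩ (fun x i => f (ξ i) (x i)) ⁻¹' Δ r))
          / volume (Δ r) = C := by
    rintro r ⟨hr1, hr2⟩
    have hr6 : r ≤ 1/6 := le_of_lt (lt_of_lt_of_le hr2 (min_le_left _ _))
    have hrβ : 4 * r ≤ β := by
      have := lt_of_lt_of_le hr2 (min_le_right _ _); linarith
    -- rewrite Δ r
    have hΔr : Δ r = {x : Fin (n+1) → UnitAddCircle |
        ∀ i, i ≠ 0 → x i - x 0 ∈ Metric.ball (0 : UnitAddCircle) r} := by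
      rw [hΔ r]
      ext x
      simp only [mem_setOf_eq, mem_ball_zero_iff, Fin.mk_zero]
      refine forall_congr' fun i => imp_congr Iff.rfl ?_
      rw [dist_eq_norm, norm_sub_rev]
    -- denominator
    have hvolΔ : volume (Δ r) = (ENNReal.ofReal (2 * r)) ^ n := by
      rw [hΔr, my_vol_pi n (fun _ => Metric.ball 0 r) (fun _ => measurableSet_ball)]
      rw [Finset.prod_const, Finset.card_univ, Fintype.card_fin, my_vol_ball,
        min_eq_right (by linarith : 2 * r ≤ 1)]
    -- numerator terms
    set T : (Fin (n+1) → Bool) → Fin (n+1) → Set UnitAddCircle :=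
      fun ξ i => {u : UnitAddCircle | ‖u‖ < r ∧ ‖u + u + u + (g (ξ i) - g (ξ 0))‖ < r} with hTdef
    have hTmeas : ∀ ξ i, MeasurableSet (T ξ i) := by
      intro ξ i
      have : T ξ i = Metric.ball (0 : UnitAddCircle) r ∩
          (fun u : UnitAddCircle => u + u + u + (g (ξ i) - g (ξ 0))) ⁻¹'
            Metric.ball (0 : UnitAddCircle) r := by
        ext u; simp [hTdef, mem_ball_zero_iff]
      rw [this]
      exact measurableSet_ball.inter (measurableSet_ball.preimage (by fun_prop))
    have hinter : ∀ ξ : Fin (n+1) → Bool,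
        Δ r ∩ (fun x i => f (ξ i) (x i)) ⁻¹' Δ r
          = {x : Fin (n+1) → UnitAddCircle | ∀ i, i ≠ 0 → x i - x 0 ∈ T ξ i} := by
      intro ξ
      have key : ∀ x : Fin (n+1) → UnitAddCircle, ∀ i : Fin (n+1),
          ‖f (ξ i) (x i) - f (ξ 0) (x 0)‖
            = ‖(x i - x 0) + (x i - x 0) + (x i - x 0) + (g (ξ i) - g (ξ 0))‖ := by
        intro x i
        rw [hf, hf]
        congr 1
        abel
      ext x
      simp only [mem_inter_iff, mem_preimage, hΔr, hΔ r, mem_setOf_eq, Fin.mk_zero,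
        mem_ball_zero_iff, hTdef]
      constructor
      · rintro ⟨h1, h2⟩ i hi
        refine ⟨h1 i hi, ?_⟩
        have := h2 i hi
        rwa [key x i] at this
      · intro h
        exact ⟨fun i hi => (h i hi).1, fun i hi => by rw [key x i]; exact (h i hi).2⟩
    have hvolξ : ∀ ξ : Fin (n+1) → Bool,
        volume (Δ r ∩ (fun x i => f (ξ i) (x i)) ⁻¹' Δ r)
          = if (∀ j : Fin n, ξ j.succ = ξ 0) then (ENNReal.ofReal (2 * r / 3)) ^ n else 0 := by
      intro ξ
      rw [hinter ξ, my_vol_pi n (T ξ) (hTmeas ξ)]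
      by_cases hc : ∀ j : Fin n, ξ j.succ = ξ 0
      · rw [if_pos hc]
        have hfac : ∀ j : Fin n, volume (T ξ j.succ) = ENNReal.ofReal (2 * r / 3) := by
          intro j
          have h0 : g (ξ j.succ) - g (ξ 0) = 0 := by rw [hc j, sub_self]
          have : T ξ j.succ = Metric.ball (0 : UnitAddCircle) (r/3) := by
            rw [← my_T0 hr1 hr6]
            ext u; simp [hTdef, h0]
          rw [this, my_vol_ball, min_eq_right (by linarith : 2 * (r/3) ≤ 1)]
          congr 1; ring
        rw [Finset.prod_congr rfl (fun j _ => hfac j), Finset.prod_const, Finset.card_univ,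
          Fintype.card_fin]
      · rw [if_neg hc]
        push_neg at hc
        obtain ⟨j, hj⟩ := hc
        refine Finset.prod_eq_zero (Finset.mem_univ j) ?_
        have : T ξ j.succ = (∅ : Set UnitAddCircle) := by
          refine my_Tb hr1 ?_
          rw [hgnorm _ _ hj]; exact hrβ
        rw [this, measure_empty]
    -- evaluate the sum
    set A : ℝ≥0∞ := (ENNReal.ofReal (2 * r / 3)) ^ n with hAdef
    have hterm : ∀ ξ : Fin (n+1) → Bool,
        ENNReal.ofReal (w ξ) * volume (Δ r ∩ (fun x i => f (ξ i) (x i)) ⁻¹' Δ r)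
          = (if ξ = (fun _ => false) then ENNReal.ofReal (p ^ (n+1)) * A else 0)
            + (if ξ = (fun _ => true) then ENNReal.ofReal ((1 - p) ^ (n+1)) * A else 0) := by
      intro ξ
      rw [hvolξ ξ]
      by_cases hc : ∀ j : Fin n, ξ j.succ = ξ 0
      · have hconst : ∀ i, ξ i = ξ 0 := by
          intro i
          cases i using Fin.cases with
          | zero => rfl
          | succ j => exact hc j
        rw [if_pos hc]
        have hne : ((fun _ : Fin (n+1) => false) : Fin (n+1) → Bool) ≠ (fun _ => true) :=
          fun h => Bool.false_ne_true (congrFun h 0)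
        cases hξ0 : ξ 0 with
        | false =>
          have hξ : ξ = (fun _ => false) := funext fun i => by rw [hconst i, hξ0]
          subst hξ
          rw [if_pos rfl, if_neg hne, add_zero, hw]
          congr 2
          simp
        | true =>
          have hξ : ξ = (fun _ => true) := funext fun i => by rw [hconst i, hξ0]
          subst hξ
          rw [if_neg (Ne.symm hne), if_pos rfl, zero_add, hw]
          congr 2
          simp
      · rw [if_neg hc, mul_zero]
        push_neg at hc
        obtain ⟨j, hj⟩ := hc
        rw [if_neg, if_neg, add_zero]
        · intro hcontra
          exact hj (by rw [hcontra])
        · intro hcontra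
          exact hj (by rw [hcontra])
    rw [Finset.sum_congr rfl (fun ξ _ => hterm ξ), Finset.sum_add_distrib,
      Finset.sum_ite_eq' Finset.univ, Finset.sum_ite_eq' Finset.univ,
      if_pos (Finset.mem_univ _), if_pos (Finset.mem_univ _), hvolΔ]
    -- final arithmetic
    have h2r : (0:ℝ) < 2 * r := by linarith
    have h2rn : (0:ℝ) < (2 * r) ^ n := pow_pos h2r n
    have hpn : (0:ℝ) ≤ p ^ (n+1) := pow_nonneg hp0 _
    have hqn : (0:ℝ) ≤ (1 - p) ^ (n+1) := pow_nonneg (by linarith) _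
    rw [hAdef, ← ENNReal.ofReal_pow (by linarith : (0:ℝ) ≤ 2 * r / 3),
      ← ENNReal.ofReal_pow (by linarith : (0:ℝ) ≤ 2 * r),
      ← add_mul, ← ENNReal.ofReal_add hpn hqn,
      ← ENNReal.ofReal_mul (by linarith),
      ← ENNReal.ofReal_div_of_pos h2rn, hCdef]
    congr 1
    rw [div_pow]
    field_simp
  -- conclude
  have hgoal : C = ENNReal.ofReal ((p ^ (n+1) + (1 - p) ^ (n+1)) / 3 ^ ((n+1) - 1)) := by
    rw [hCdef]; norm_num
  rw [← hgoal]
  refine Filter.Tendsto.congr' ?_ tendsto_const_nhds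
  filter_upwards [Ioo_mem_nhdsGT_of_mem (Set.mem_Ico.mpr ⟨le_refl (0:ℝ), hε⟩)] with r hr
  exact (main r hr).symm
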